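/- arXiv:2108.03197 — 2 statements merged into one kernel-verified Lean document; each statement's English description precedes it below -/
import Mathlib

section
/- Uniqueness of the decomposition in Theorem 4.7: Let n ≥ 2 and let C ⊆ ℝ^n ∖ {0} be open and conic. Suppose Z, Z' : C → ℝ^n are smooth and positively 2-homogeneous, A, A' : C → ℝ^n are smooth and positively 0-homogeneous, and Z^k_{·i} + A_i y^k = Z'^k_{·i} + A'_i y^k on C for all indices i, k. Then Z = Z' and A = A'. (Hence a nonlinear connection of the form N^L + ∂̇Z + A⊗C determines the pair (Z, A) unequivocally.) -/
open scoped BigOperators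

noncomputable section

/-- Partial derivative `∂f/∂y^i`. -/
def pd {n : ℕ} (f : (Fin n → ℝ) → ℝ) (i : Fin n) : (Fin n → ℝ) → ℝ :=
  fun y => fderiv ℝ f y (Pi.single i 1)

/-- `C` is a conic set: stable under positive scalings. -/
def Conic {n : ℕ} (C : Set (Fin n → ℝ)) : Prop :=
  ∀ ⦃y⦄, y ∈ C → ∀ ⦃t : ℝ⦄, 0 < t → t • y ∈ C

/-- `f` is positively `α`-homogeneous on `C`. -/
def PosHom {n : ℕ} (α : ℝ) (C : Set (Fin n → ℝ)) (f : (Fin n → ℝ) → ℝ) : Prop :=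
  ∀ y ∈ C, ∀ t : ℝ, 0 < t → f (t • y) = t ^ α * f y

/-- Vector-valued positively `α`-homogeneous map on `C`. -/
def PosHomMap {n : ℕ} (α : ℝ) (C : Set (Fin n → ℝ)) (Z : (Fin n → ℝ) → Fin n → ℝ) : Prop :=
  ∀ y ∈ C, ∀ t : ℝ, 0 < t → Z (t • y) = t ^ α • Z y


lemma single_decomp {n : ℕ} (y : Fin n → ℝ) :
    ∑ i, y i • (Pi.single i 1 : Fin n → ℝ) = y := by
  funext j
  rw [Finset.sum_apply]
  simp [Pi.single_apply]

lemma clm_sum {n : ℕ} (L : (Fin n → ℝ) →L[ℝ] ℝ) (y : Fin n → ℝ) :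
    L y = ∑ i, y i * L (Pi.single i 1) := by
  conv_lhs => rw [← single_decomp y]
  rw [map_sum]
  simp [smul_eq_mul]

lemma euler {n : ℕ} {f : (Fin n → ℝ) → ℝ} {α : ℝ} {y : Fin n → ℝ}
    (hhom : ∀ t : ℝ, 0 < t → f (t • y) = t ^ α * f y)
    (hdf : DifferentiableAt ℝ f y) :
    ∑ i, y i * pd f i y = α * f y := by
  have hs : HasDerivAt (fun t : ℝ => t • y) y 1 := by
    simpa using (hasDerivAt_id (1 : ℝ)).smul_const y
  have hF : HasFDerivAt f (fderiv ℝ f y) ((1 : ℝ) • y) := by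
    rw [one_smul]; exact hdf.hasFDerivAt
  have h1 : HasDerivAt (fun t : ℝ => f (t • y)) (fderiv ℝ f y y) 1 := by
    exact hF.comp_hasDerivAt 1 hs
  have h2 : HasDerivAt (fun t : ℝ => t ^ α * f y) (α * f y) 1 := by
    simpa using (Real.hasDerivAt_rpow_const (x := (1 : ℝ)) (p := α)
      (Or.inl one_ne_zero)).mul_const (f y)
  have hev : (fun t : ℝ => f (t • y)) =ᶠ[nhds (1 : ℝ)] fun t => t ^ α * f y := by
    filter_upwards [Ioi_mem_nhds (show (0:ℝ) < 1 by norm_num)] with t ht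
    exact hhom t ht
  have h1' : HasDerivAt (fun t : ℝ => t ^ α * f y) (fderiv ℝ f y y) 1 :=
    h1.congr_of_eventuallyEq hev.symm
  have hkey := h1'.unique h2
  simp only [pd]
  rw [← clm_sum]
  exact hkey

def Bsum {n : ℕ} (A A' : (Fin n → ℝ) → Fin n → ℝ) : (Fin n → ℝ) → ℝ :=
  fun z => ∑ j, (A z j - A' z j) * z j

/-- **Uniqueness of the decomposition in Theorem 4.7.** If `Z, Z'` are smooth positively
2-homogeneous and `A, A'` are smooth positively 0-homogeneous on the open conic
`C ⊆ ℝ^n ∖ {0}`, and `Z^k_{·i} + A_i y^k = Z'^k_{·i} + A'_i y^k` on `C`, then `Z = Z'` and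
`A = A'` on `C`. -/
theorem decomposition_uniqueness
    {n : ℕ} (hn : 2 ≤ n) (C : Set (Fin n → ℝ)) (hCopen : IsOpen C)
    (hCnz : ∀ y ∈ C, y ≠ 0) (hCconic : Conic C)
    (Z Z' A A' : (Fin n → ℝ) → Fin n → ℝ)
    (hZsmooth : ContDiffOn ℝ (⊤ : ℕ∞) Z C) (hZhom : PosHomMap 2 C Z)
    (hZ'smooth : ContDiffOn ℝ (⊤ : ℕ∞) Z' C) (hZ'hom : PosHomMap 2 C Z')
    (hAsmooth : ContDiffOn ℝ (⊤ : ℕ∞) A C) (hAhom : PosHomMap 0 C A)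
    (hA'smooth : ContDiffOn ℝ (⊤ : ℕ∞) A' C) (hA'hom : PosHomMap 0 C A')
    (heq : ∀ y ∈ C, ∀ i k,
      pd (fun z => Z z k) i y + A y i * y k = pd (fun z => Z' z k) i y + A' y i * y k) :
    ∀ y ∈ C, Z y = Z' y ∧ A y = A' y := by
  -- componentwise differentiability
  have hZd : ∀ y ∈ C, ∀ k, DifferentiableAt ℝ (fun z => Z z k) y := by
    intro y hy k
    have h := (hZsmooth.differentiableOn (by simp)).differentiableAt
      (hCopen.mem_nhds hy)
    exact (differentiableAt_pi.mp h) k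
  have hZ'd : ∀ y ∈ C, ∀ k, DifferentiableAt ℝ (fun z => Z' z k) y := by
    intro y hy k
    have h := (hZ'smooth.differentiableOn (by simp)).differentiableAt
      (hCopen.mem_nhds hy)
    exact (differentiableAt_pi.mp h) k
  have hAd : ∀ y ∈ C, ∀ k, DifferentiableAt ℝ (fun z => A z k) y := by
    intro y hy k
    have h := (hAsmooth.differentiableOn (by simp)).differentiableAt
      (hCopen.mem_nhds hy)
    exact (differentiableAt_pi.mp h) k
  have hA'd : ∀ y ∈ C, ∀ k, DifferentiableAt ℝ (fun z => A' z k) y := by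
    intro y hy k
    have h := (hA'smooth.differentiableOn (by simp)).differentiableAt
      (hCopen.mem_nhds hy)
    exact (differentiableAt_pi.mp h) k
  have hproj : ∀ (j : Fin n) (y : Fin n → ℝ), DifferentiableAt ℝ (fun z : Fin n → ℝ => z j) y :=
    fun j y => (differentiableAt_pi.mp differentiableAt_id) j
  have hWd : ∀ y ∈ C, ∀ k, DifferentiableAt ℝ (fun z => Z z k - Z' z k) y :=
    fun y hy k => (hZd y hy k).sub (hZ'd y hy k)
  have hfd : ∀ y ∈ C, DifferentiableAt ℝ (Bsum A A') y := by
    intro y hy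
    exact DifferentiableAt.fun_sum fun j _ => ((hAd y hy j).sub (hA'd y hy j)).mul (hproj j y)
  -- Step 1: the partial derivatives of the difference
  have key1 : ∀ y ∈ C, ∀ i k,
      pd (fun z => Z z k - Z' z k) i y = -((A y i - A' y i) * y k) := by
    intro y hy i k
    have hsub : pd (fun z => Z z k - Z' z k) i y
        = pd (fun z => Z z k) i y - pd (fun z => Z' z k) i y := by
      simp only [pd]
      rw [fderiv_fun_sub (hZd y hy k) (hZ'd y hy k)]
      simp
    rw [hsub]
    have h := heq y hy i k
    linarith
  -- Step 2: Euler for the 2-homogeneous difference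
  have keyW : ∀ y ∈ C, ∀ k, 2 * (Z y k - Z' y k) = -(Bsum A A' y * y k) := by
    intro y hy k
    have hW2 : ∀ t : ℝ, 0 < t →
        (fun z => Z z k - Z' z k) (t • y) = t ^ (2:ℝ) * (Z y k - Z' y k) := by
      intro t ht
      have h1 := hZhom y hy t ht
      have h2 := hZ'hom y hy t ht
      simp only
      rw [h1, h2]
      simp [smul_eq_mul]
      ring
    have hE := euler (f := fun z => Z z k - Z' z k) (α := 2) hW2 (hWd y hy k)
    rw [← hE]
    calc ∑ i, y i * pd (fun z => Z z k - Z' z k) i y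
        = ∑ i, -((A y i - A' y i) * y i * y k) := by
          refine Finset.sum_congr rfl fun i _ => ?_
          rw [key1 y hy i k]; ring
      _ = -(Bsum A A' y * y k) := by
          simp only [Bsum]
          rw [Finset.sum_neg_distrib, Finset.sum_mul]
  -- Euler for Bsum (1-homogeneous)
  have hfE : ∀ y ∈ C, ∑ i, y i * pd (Bsum A A') i y = 1 * Bsum A A' y := by
    intro y hy
    refine euler (α := 1) ?_ (hfd y hy)
    intro t ht
    have hA := hAhom y hy t ht
    have hA' := hA'hom y hy t ht
    simp only [Bsum]
    rw [hA, hA']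
    simp [Real.rpow_zero, Real.rpow_one, smul_eq_mul, Finset.mul_sum]
    exact Finset.sum_congr rfl fun j _ => by ring
  -- Step 3: Bsum vanishes on C
  have hf0 : ∀ y ∈ C, Bsum A A' y = 0 := by
    intro y hy
    have key2 : ∀ i : Fin n,
        2 * (-((A y i - A' y i) * y i)) = -(Bsum A A' y * 1 + y i * pd (Bsum A A') i y) := by
      intro i
      have hev : (fun z => 2 * (Z z i - Z' z i)) =ᶠ[nhds y]
          (fun z => -(Bsum A A' z * z i)) := by
        filter_upwards [hCopen.mem_nhds hy] with z hz
        exact keyW z hz i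
      have hL : fderiv ℝ (fun z => 2 * (Z z i - Z' z i)) y
          = (2:ℝ) • fderiv ℝ (fun z => Z z i - Z' z i) y :=
        fderiv_const_mul (hWd y hy i) 2
      have hRder : HasFDerivAt (fun z => -(Bsum A A' z * z i))
          (-((Bsum A A' y) • (ContinuousLinearMap.proj i :
              (Fin n → ℝ) →L[ℝ] ℝ) + y i • fderiv ℝ (Bsum A A') y)) y :=
        ((hfd y hy).hasFDerivAt.mul
          ((ContinuousLinearMap.proj i : (Fin n → ℝ) →L[ℝ] ℝ).hasFDerivAt)).neg
      have hR := hRder.fderiv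
      have hEq := hev.fderiv_eq (𝕜 := ℝ)
      have happ := congrArg (fun (L : (Fin n → ℝ) →L[ℝ] ℝ) => L (Pi.single i 1)) hEq
      rw [hL, hR] at happ
      simp only [ContinuousLinearMap.smul_apply, ContinuousLinearMap.neg_apply,
        ContinuousLinearMap.add_apply, ContinuousLinearMap.proj_apply,
        Pi.single_eq_same, smul_eq_mul] at happ
      have hp := key1 y hy i i
      simp only [pd] at hp ⊢
      rw [hp] at happ
      linarith [happ]
    have hsum := Finset.sum_congr rfl (fun i (_ : i ∈ Finset.univ) => key2 i)
    have hL : ∑ i, 2 * (-((A y i - A' y i) * y i)) = -2 * Bsum A A' y := by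
      simp only [Bsum]
      rw [Finset.mul_sum]
      exact Finset.sum_congr rfl fun i _ => by ring
    have hR : ∑ i, -(Bsum A A' y * 1 + y i * pd (Bsum A A') i y)
        = -((n : ℝ) * Bsum A A' y + ∑ i, y i * pd (Bsum A A') i y) := by
      rw [Finset.sum_neg_distrib, Finset.sum_add_distrib]
      simp [Finset.sum_const, Finset.card_univ, mul_one, nsmul_eq_mul, mul_comm]
    rw [hL, hR] at hsum
    have hfe := hfE y hy
    have hnf : ((n : ℝ) - 1) * Bsum A A' y = 0 := by linarith
    have hne : ((n : ℝ) - 1) ≠ 0 := by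
      have : (2 : ℝ) ≤ (n : ℝ) := by exact_mod_cast hn
      linarith
    exact (mul_eq_zero.mp hnf).resolve_left hne
  -- Z = Z' on C
  have hZeq : ∀ y ∈ C, ∀ k, Z y k = Z' y k := by
    intro y hy k
    have h := keyW y hy k
    rw [hf0 y hy] at h
    simp at h
    linarith
  intro y hy
  refine ⟨funext fun k => hZeq y hy k, funext fun i => ?_⟩
  obtain ⟨k, hk⟩ : ∃ k, y k ≠ 0 := Function.ne_iff.mp (hCnz y hy)
  have hev0 : (fun z => Z z k - Z' z k) =ᶠ[nhds y] (fun _ => (0:ℝ)) := by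
    filter_upwards [hCopen.mem_nhds hy] with z hz
    rw [hZeq z hz k]; ring
  have h0 : pd (fun z => Z z k - Z' z k) i y = 0 := by
    simp only [pd]
    rw [hev0.fderiv_eq (𝕜 := ℝ)]
    simp
  have h1 := key1 y hy i k
  rw [h0] at h1
  rcases mul_eq_zero.mp (by linarith : (A y i - A' y i) * y k = 0) with h | h
  · linarith
  · exact absurd h hk
end
end

section
/- Key step of Cor. 4.12(ii): Let (C, L) be a fiberwise pseudo-Finsler datum on ℝ^n (n ≥ 2). Suppose Z, Z₀ : C → ℝ^n are smooth and positively 2-homogeneous, both satisfying on C the constraint (n+2)(y_a Z^a / L) − 2 C_a Z^a − Z^a_{·a} = 0 (respectively with Z₀ in place of Z), and suppose Z = Z₀ + ϱ · y for some smooth positively 1-homogeneous function ϱ : C → ℝ. Then ϱ = 0, hence Z = Z₀. (Consequently, two symmetric solutions of the affine equation whose Berwald connections share pregeodesics must coincide.) -/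
open scoped BigOperators

noncomputable section

/-- Fundamental tensor `g_ij(y) = (1/2) L_{·i·j}(y)`. -/
def gmet {n : ℕ} (L : (Fin n → ℝ) → ℝ) (y : Fin n → ℝ) : Matrix (Fin n) (Fin n) ℝ :=
  Matrix.of fun i j => (1 / 2) * pd (pd L i) j y

/-- Inverse fundamental tensor `g^{ij}`. -/
def ginv {n : ℕ} (L : (Fin n → ℝ) → ℝ) (y : Fin n → ℝ) : Matrix (Fin n) (Fin n) ℝ :=
  (gmet L y)⁻¹

/-- Lowered index `y_i = g_{ia} y^a`. -/
def yLow {n : ℕ} (L : (Fin n → ℝ) → ℝ) (y : Fin n → ℝ) (i : Fin n) : ℝ :=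
  ∑ a, gmet L y i a * y a

/-- Cartan tensor `C_{ijk} = (1/2) g_{ij·k}`. -/
def cartan {n : ℕ} (L : (Fin n → ℝ) → ℝ) (i j k : Fin n) : (Fin n → ℝ) → ℝ :=
  fun y => (1 / 2) * pd (fun z => gmet L z i j) k y

/-- Mean Cartan tensor `C_i = g^{ab} C_{abi}`. -/
def meanCartan {n : ℕ} (L : (Fin n → ℝ) → ℝ) (i : Fin n) : (Fin n → ℝ) → ℝ :=
  fun y => ∑ a, ∑ b, ginv L y a b * cartan L a b i y

/-- A fiberwise pseudo-Finsler datum on `ℝ^n`. -/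
structure FinslerDatum (n : ℕ) (C : Set (Fin n → ℝ)) (L : (Fin n → ℝ) → ℝ) : Prop where
  openC : IsOpen C
  nzC : ∀ y ∈ C, y ≠ 0
  conicC : Conic C
  smoothL : ContDiffOn ℝ (⊤ : ℕ∞) L C
  homL : PosHom 2 C L
  LneC : ∀ y ∈ C, L y ≠ 0
  gInvC : ∀ y ∈ C, IsUnit (gmet L y).det

/-- Closure of `C` inside `ℝ^n ∖ {0}`. -/
def clos {n : ℕ} (C : Set (Fin n → ℝ)) : Set (Fin n → ℝ) := closure C \ {0}

/-- A proper fiberwise datum on `ℝ^n`. -/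
structure ProperDatum (n : ℕ) (C U : Set (Fin n → ℝ)) (L : (Fin n → ℝ) → ℝ) : Prop where
  connC : IsConnected C
  openC : IsOpen C
  conicC : Conic C
  nzC : ∀ y ∈ C, y ≠ 0
  openU : IsOpen U
  conicU : Conic U
  nzU : ∀ y ∈ U, y ≠ 0
  closSub : clos C ⊆ U
  smoothL : ContDiffOn ℝ (⊤ : ℕ∞) L U
  homL : PosHom 2 U L
  posC : ∀ y ∈ C, 0 < L y
  zeroBd : ∀ y ∈ clos C \ C, L y = 0
  gInvU : ∀ y ∈ U, IsUnit (gmet L y).det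

/-- Lorentzian signature `(+,−,…,−)` of a symmetric matrix, via Sylvester normal form. -/
def LorentzSignature {n : ℕ} (g : Matrix (Fin n) (Fin n) ℝ) : Prop :=
  ∃ P : Matrix (Fin n) (Fin n) ℝ, IsUnit P.det ∧
    P.transpose * g * P = Matrix.diagonal (fun i : Fin n => if (i : ℕ) = 0 then (1 : ℝ) else -1)

/-- A properly Lorentz fiberwise datum on `ℝ^n`. -/
structure LorentzDatum (n : ℕ) (C U : Set (Fin n → ℝ)) (L : (Fin n → ℝ) → ℝ)
    extends ProperDatum n C U L : Prop where
  lorentz : ∀ y ∈ clos C, LorentzSignature (gmet L y)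
  halfspace : ∃ φ : (Fin n → ℝ) →ₗ[ℝ] ℝ, φ ≠ 0 ∧ ∀ v ∈ clos C, 0 < φ v

/-- `σ^Z = y_a Z^a / L`. -/
def sigmaZ {n : ℕ} (L : (Fin n → ℝ) → ℝ) (Z : (Fin n → ℝ) → Fin n → ℝ) :
    (Fin n → ℝ) → ℝ :=
  fun y => (∑ a, yLow L y a * Z y a) / L y

/-- `K^Z_i = −(2/(n+2)) (2 C_{a·i} Z^a + C_a Z^a_{·i})`. -/
def Kten {n : ℕ} (L : (Fin n → ℝ) → ℝ) (Z : (Fin n → ℝ) → Fin n → ℝ) (i : Fin n) :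
    (Fin n → ℝ) → ℝ :=
  fun y => -(2 / ((n : ℝ) + 2)) *
    (2 * ∑ a, pd (meanCartan L a) i y * Z y a + ∑ a, meanCartan L a y * pd (fun z => Z z a) i y)

/-- Euler's theorem: directional derivative along `y`. -/
lemma euler_fderiv {n : ℕ} {C : Set (Fin n → ℝ)} {f : (Fin n → ℝ) → ℝ} {α : ℝ}
    (hf : PosHom α C f) {y : Fin n → ℝ} (hy : y ∈ C) (hd : DifferentiableAt ℝ f y) :
    fderiv ℝ f y y = α * f y := by
  have hg : HasDerivAt (fun t : ℝ => t • y) y 1 := by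
    simpa using (hasDerivAt_id (1 : ℝ)).smul_const y
  have h1 : HasDerivAt (fun t : ℝ => f (t • y)) (fderiv ℝ f y y) 1 := by
    have hd' : HasFDerivAt f (fderiv ℝ f y) ((1 : ℝ) • y) := by
      rw [one_smul]; exact hd.hasFDerivAt
    have := hd'.comp_hasDerivAt (1 : ℝ) hg
    exact this
  have h2 : HasDerivAt (fun t : ℝ => t ^ α * f y) (α * f y) 1 := by
    have := (Real.hasDerivAt_rpow_const (x := 1) (p := α) (Or.inl one_ne_zero)).mul_const (f y)
    simpa using this
  have heq : (fun t : ℝ => f (t • y)) =ᶠ[nhds (1 : ℝ)] fun t : ℝ => t ^ α * f y := by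
    filter_upwards [Ioi_mem_nhds (show (0:ℝ) < 1 by norm_num)] with t ht
    exact hf y hy t ht
  have h2' : HasDerivAt (fun t : ℝ => f (t • y)) (α * f y) 1 :=
    h2.congr_of_eventuallyEq heq
  exact h1.unique h2'

lemma single_sum {n : ℕ} (y : Fin n → ℝ) : ∑ a, y a • (Pi.single a 1 : Fin n → ℝ) = y := by
  have : ∀ a : Fin n, y a • (Pi.single a 1 : Fin n → ℝ) = Pi.single a (y a) := by
    intro a; ext j; by_cases h : j = a <;> simp [h, Pi.single_apply]
  simp only [this]
  exact Finset.univ_sum_single y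

/-- Euler's theorem, sum form. -/
lemma euler_sum {n : ℕ} {C : Set (Fin n → ℝ)} {f : (Fin n → ℝ) → ℝ} {α : ℝ}
    (hf : PosHom α C f) {y : Fin n → ℝ} (hy : y ∈ C) (hd : DifferentiableAt ℝ f y) :
    ∑ a, pd f a y * y a = α * f y := by
  have : ∑ a, pd f a y * y a = fderiv ℝ f y y := by
    have h1 : fderiv ℝ f y y = fderiv ℝ f y (∑ a, y a • (Pi.single a 1 : Fin n → ℝ)) := by
      rw [single_sum y]
    rw [h1, map_sum]
    simp [pd, mul_comm]
  rw [this, euler_fderiv hf hy hd]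

/-- `pd` preserves smoothness on an open set. -/
lemma pd_contDiffOn {n : ℕ} {C : Set (Fin n → ℝ)} {f : (Fin n → ℝ) → ℝ}
    (hC : IsOpen C) (hf : ContDiffOn ℝ (⊤ : ℕ∞) f C) (i : Fin n) :
    ContDiffOn ℝ (⊤ : ℕ∞) (pd f i) C := by
  have h : ContDiffOn ℝ (⊤ : ℕ∞) (fun y => fderiv ℝ f y) C :=
    ((contDiffOn_infty_iff_fderiv_of_isOpen hC).mp hf).2
  have happly : ContDiff ℝ (⊤ : ℕ∞)
      (fun φ : (Fin n → ℝ) →L[ℝ] ℝ => φ (Pi.single i 1)) :=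
    (ContinuousLinearMap.apply ℝ ℝ (Pi.single i 1 : Fin n → ℝ)).contDiff
  exact happly.comp_contDiffOn h

/-- `pd` lowers homogeneity degree by one. -/
lemma pd_posHom {n : ℕ} {C : Set (Fin n → ℝ)} {f : (Fin n → ℝ) → ℝ} {α : ℝ}
    (hC : IsOpen C) (hcon : Conic C) (hdf : DifferentiableOn ℝ f C)
    (hf : PosHom α C f) (i : Fin n) : PosHom (α - 1) C (pd f i) := by
  intro y hy t ht
  have hty : t • y ∈ C := hcon hy ht
  have hdy : DifferentiableAt ℝ f y := hdf.differentiableAt (hC.mem_nhds hy)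
  have hdty : DifferentiableAt ℝ f (t • y) := hdf.differentiableAt (hC.mem_nhds hty)
  have hgder : HasFDerivAt (fun x : Fin n → ℝ => t • x)
      (t • ContinuousLinearMap.id ℝ (Fin n → ℝ)) y :=
    (ContinuousLinearMap.id ℝ (Fin n → ℝ)).hasFDerivAt.const_smul t
  have hcomp : HasFDerivAt (fun x => f (t • x))
      ((fderiv ℝ f (t • y)).comp (t • ContinuousLinearMap.id ℝ (Fin n → ℝ))) y :=
    (hdty.hasFDerivAt.comp y hgder)
  have heq : (fun x => f (t • x)) =ᶠ[nhds y] fun x => t ^ α * f x := by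
    filter_upwards [hC.mem_nhds hy] with x hx
    exact hf x hx t ht
  have hcomp2 : HasFDerivAt (fun x => f (t • x)) (t ^ α • fderiv ℝ f y) y := by
    have := (hdy.hasFDerivAt.const_smul (t ^ α)).congr_of_eventuallyEq heq
    simpa [smul_eq_mul] using this
  have huniq := hcomp.unique hcomp2
  have happ := congrArg (fun φ : (Fin n → ℝ) →L[ℝ] ℝ => φ (Pi.single i 1)) huniq
  simp only [ContinuousLinearMap.coe_comp', ContinuousLinearMap.coe_smul',
    Function.comp_apply, Pi.smul_apply, ContinuousLinearMap.coe_id', id_eq,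
    ContinuousLinearMap.map_smul, smul_eq_mul] at happ
  -- happ : t * (fderiv f (t•y)) (single i 1) = t^α * (fderiv f y) (single i 1)
  have : pd f i (t • y) = t ^ α * pd f i y / t := by
    field_simp [pd] at happ ⊢
    unfold pd at *; linarith [happ]
  rw [this, Real.rpow_sub ht, Real.rpow_one]
  ring

lemma topDiffOn {E F : Type*} [NormedAddCommGroup E] [NormedSpace ℝ E]
    [NormedAddCommGroup F] [NormedSpace ℝ F] {f : E → F} {s : Set E}
    (h : ContDiffOn ℝ (⊤ : ℕ∞) f s) : DifferentiableOn ℝ f s :=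
  h.differentiableOn (by simp)
/-- **Key step of Cor. 4.12(ii).** If `Z` and `Z₀` are smooth positively 2-homogeneous maps
both satisfying the constraint `(n+2)(y_a Z^a / L) − 2 C_a Z^a − Z^a_{·a} = 0` on `C`, and
`Z = Z₀ + ϱ·y` for a smooth positively 1-homogeneous `ϱ`, then `ϱ = 0` and `Z = Z₀`. -/
theorem same_fiber_from_shared_pregeodesics
    {n : ℕ} (hn : 2 ≤ n) (C : Set (Fin n → ℝ)) (L : (Fin n → ℝ) → ℝ)
    (hD : FinslerDatum n C L)
    (Z Z₀ : (Fin n → ℝ) → Fin n → ℝ)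
    (hZsmooth : ContDiffOn ℝ (⊤ : ℕ∞) Z C) (hZhom : PosHomMap 2 C Z)
    (hZ₀smooth : ContDiffOn ℝ (⊤ : ℕ∞) Z₀ C) (hZ₀hom : PosHomMap 2 C Z₀)
    (hZeq : ∀ y ∈ C,
      ((n : ℝ) + 2) * ((∑ a, yLow L y a * Z y a) / L y)
        - 2 * ∑ a, meanCartan L a y * Z y a - ∑ a, pd (fun z => Z z a) a y = 0)
    (hZ₀eq : ∀ y ∈ C,
      ((n : ℝ) + 2) * ((∑ a, yLow L y a * Z₀ y a) / L y)
        - 2 * ∑ a, meanCartan L a y * Z₀ y a - ∑ a, pd (fun z => Z₀ z a) a y = 0)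
    (ϱ : (Fin n → ℝ) → ℝ)
    (hϱsmooth : ContDiffOn ℝ (⊤ : ℕ∞) ϱ C) (hϱhom : PosHom 1 C ϱ)
    (hrel : ∀ y ∈ C, Z y = Z₀ y + ϱ y • y) :
    ∀ y ∈ C, ϱ y = 0 ∧ Z y = Z₀ y := by
  have hC := hD.openC
  have hcon := hD.conicC
  have hL := hD.smoothL
  have hhomL := hD.homL
  intro y hy
  have hnhds : C ∈ nhds y := hC.mem_nhds hy
  have hLne : L y ≠ 0 := hD.LneC y hy
  have hdAt : ∀ {f : (Fin n → ℝ) → ℝ}, ContDiffOn ℝ (⊤ : ℕ∞) f C → DifferentiableAt ℝ f y :=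
    fun h => (topDiffOn h).differentiableAt hnhds
  have hpdL : ∀ a, ContDiffOn ℝ (⊤ : ℕ∞) (pd L a) C := fun a => pd_contDiffOn hC hL a
  have hpdLhom : ∀ a, PosHom (2 - 1) C (pd L a) :=
    fun a => pd_posHom hC hcon (topDiffOn hL) hhomL a
  have hpd2hom : ∀ a b, PosHom (2 - 1 - 1) C (pd (pd L a) b) :=
    fun a b => pd_posHom hC hcon (topDiffOn (hpdL a)) (hpdLhom a) b
  have hgfun : ∀ a b, (fun z => gmet L z a b) = fun z => (1 / 2) * pd (pd L a) b z := by
    intro a b; rfl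
  have hgsmooth : ∀ a b, ContDiffOn ℝ (⊤ : ℕ∞) (fun z => gmet L z a b) C := by
    intro a b; rw [hgfun a b]
    exact contDiffOn_const.mul (pd_contDiffOn hC (hpdL a) b)
  have hghom : ∀ a b, PosHom (2 - 1 - 1) C (fun z => gmet L z a b) := by
    intro a b x hx t ht
    have h := hpd2hom a b x hx t ht
    simp only [gmet, Matrix.of_apply]
    rw [h]; ring
  -- Euler identities
  have A2 : ∑ a, pd L a y * y a = 2 * L y := by
    have := euler_sum hhomL hy (hdAt hL); simpa using this
  have A1 : ∀ a, ∑ i, pd (pd L a) i y * y i = pd L a y := by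
    intro a
    have h := euler_sum (hpdLhom a) hy (hdAt (hpdL a))
    rw [h]; norm_num
  have A : ∑ a, yLow L y a * y a = L y := by
    have hyl : ∀ a, yLow L y a * y a = (1 / 2) * (pd L a y * y a) := by
      intro a
      have : yLow L y a = (1 / 2) * ∑ i, pd (pd L a) i y * y i := by
        simp only [yLow, gmet, Matrix.of_apply, Finset.mul_sum]
        exact Finset.sum_congr rfl fun i _ => by ring
      rw [this, A1 a]; ring
    simp only [hyl, ← Finset.mul_sum, A2]; ring
  have Bg : ∀ a b, ∑ i, pd (fun z => gmet L z a b) i y * y i = 0 := by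
    intro a b
    have h := euler_sum (hghom a b) hy (hdAt (hgsmooth a b))
    rw [h]; norm_num
  have B : ∑ i, meanCartan L i y * y i = 0 := by
    simp only [meanCartan, cartan, Finset.sum_mul]
    rw [Finset.sum_comm]
    refine Finset.sum_eq_zero fun a _ => ?_
    rw [Finset.sum_comm]
    refine Finset.sum_eq_zero fun b _ => ?_
    have hterm : ∀ i, ginv L y a b * ((1 / 2) * pd (fun z => gmet L z a b) i y) * y i
        = (ginv L y a b * (1 / 2)) * (pd (fun z => gmet L z a b) i y * y i) := by
      intro i; ring
    simp only [hterm, ← Finset.mul_sum, Bg a b, mul_zero]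
  -- Euler for ϱ
  have Aϱ : ∑ a, pd ϱ a y * y a = ϱ y := by
    have := euler_sum hϱhom hy (hdAt hϱsmooth)
    simpa using this
  -- derivative term identity
  have hϱd : DifferentiableAt ℝ ϱ y := hdAt hϱsmooth
  have hZ₀At : DifferentiableAt ℝ Z₀ y := (topDiffOn hZ₀smooth).differentiableAt hnhds
  have hZ₀da : ∀ a, DifferentiableAt ℝ (fun z => Z₀ z a) y := fun a =>
    differentiableAt_pi.mp hZ₀At a
  have hDa : ∀ a, pd (fun z => Z z a) a y
      = pd (fun z => Z₀ z a) a y + (pd ϱ a y * y a + ϱ y) := by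
    intro a
    have hF : (fun z => Z z a) =ᶠ[nhds y] fun z => Z₀ z a + ϱ z * z a := by
      filter_upwards [hnhds] with x hx
      rw [hrel x hx]; simp
    have hproj : HasFDerivAt (fun z : Fin n → ℝ => z a)
        (ContinuousLinearMap.proj a : (Fin n → ℝ) →L[ℝ] ℝ) y :=
      (ContinuousLinearMap.proj a : (Fin n → ℝ) →L[ℝ] ℝ).hasFDerivAt
    have hprod : HasFDerivAt (fun z : Fin n → ℝ => ϱ z * z a)
        (ϱ y • (ContinuousLinearMap.proj a : (Fin n → ℝ) →L[ℝ] ℝ) + y a • fderiv ℝ ϱ y) y := by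
      have := hϱd.hasFDerivAt.mul hproj
      exact this
    have hadd : HasFDerivAt (fun z => Z₀ z a + ϱ z * z a)
        (fderiv ℝ (fun z => Z₀ z a) y
          + (ϱ y • (ContinuousLinearMap.proj a : (Fin n → ℝ) →L[ℝ] ℝ) + y a • fderiv ℝ ϱ y)) y :=
      (hZ₀da a).hasFDerivAt.add hprod
    have heq : fderiv ℝ (fun z => Z z a) y
        = fderiv ℝ (fun z => Z₀ z a) y
          + (ϱ y • (ContinuousLinearMap.proj a : (Fin n → ℝ) →L[ℝ] ℝ) + y a • fderiv ℝ ϱ y) := by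
      rw [hF.fderiv_eq]; exact hadd.fderiv
    simp only [pd, heq, ContinuousLinearMap.add_apply, ContinuousLinearMap.smul_apply,
      ContinuousLinearMap.proj_apply, Pi.single_eq_same, smul_eq_mul]
    ring
  have relD : ∑ a, pd (fun z => Z z a) a y
      = ∑ a, pd (fun z => Z₀ z a) a y + ((n : ℝ) + 1) * ϱ y := by
    simp only [hDa, Finset.sum_add_distrib, Aϱ]
    simp [Finset.sum_const, Finset.card_univ]
    ring
  -- substitution identities
  have hZa : ∀ a, Z y a = Z₀ y a + ϱ y * y a := by
    intro a; rw [hrel y hy]; simp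
  have relS : ∑ a, yLow L y a * Z y a = ∑ a, yLow L y a * Z₀ y a + ϱ y * L y := by
    have : ∀ a, yLow L y a * Z y a = yLow L y a * Z₀ y a + ϱ y * (yLow L y a * y a) := by
      intro a; rw [hZa a]; ring
    simp only [this, Finset.sum_add_distrib, ← Finset.mul_sum, A]
  have relC : ∑ a, meanCartan L a y * Z y a = ∑ a, meanCartan L a y * Z₀ y a := by
    have : ∀ a, meanCartan L a y * Z y a
        = meanCartan L a y * Z₀ y a + ϱ y * (meanCartan L a y * y a) := by
      intro a; rw [hZa a]; ring
    simp only [this, Finset.sum_add_distrib, ← Finset.mul_sum, B, mul_zero, add_zero]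
  -- conclude
  have h1 := hZeq y hy
  have h2 := hZ₀eq y hy
  rw [relS, relC, relD] at h1
  have hdiv : (∑ a, yLow L y a * Z₀ y a + ϱ y * L y) / L y
      = (∑ a, yLow L y a * Z₀ y a) / L y + ϱ y := by
    field_simp
  rw [hdiv] at h1
  have hϱ0 : ϱ y = 0 := by linear_combination h1 - h2
  refine ⟨hϱ0, ?_⟩
  rw [hrel y hy, hϱ0]
  simp
end
end
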